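/- arXiv:1805.10654 — 3 statements merged into one kernel-verified Lean document; each statement's English description precedes it below -/
import Mathlib

section
/- The logarithmic regularizer r(x) = log(1 + θ|x|)/log(1+θ) with θ > 0 admits the DC decomposition r = r⁺ − r⁻ with r⁺(x) = η|x|, η = θ/log(1+θ), and r⁻(x) = η|x| − r(x), where r⁺ is convex and r⁻ is convex with Lipschitz continuous derivative on ℝ. -/
/-- DC decomposition of the logarithmic regularizer
`r(x) = log(1+θ|x|)/log(1+θ)`: with `η = θ/log(1+θ)`, `r⁺(x) = η|x|` is convex
and `r⁻(x) = η|x| − r(x)` is convex with Lipschitz continuous derivative on ℝ. -/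
theorem stmt_5 (θ : ℝ) (hθ : 0 < θ)
    (r rplus rminus : ℝ → ℝ) (η : ℝ)
    (hη : η = θ / Real.log (1 + θ))
    (hr : ∀ x, r x = Real.log (1 + θ * |x|) / Real.log (1 + θ))
    (hrplus : ∀ x, rplus x = η * |x|)
    (hrminus : ∀ x, rminus x = η * |x| - r x) :
    (∀ x, r x = rplus x - rminus x) ∧
    ConvexOn ℝ Set.univ rplus ∧
    ConvexOn ℝ Set.univ rminus ∧
    Differentiable ℝ rminus ∧
    ∃ L : NNReal, LipschitzWith L (deriv rminus) := by
  set Lg : ℝ := Real.log (1 + θ) with hLg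
  have hLpos : 0 < Lg := Real.log_pos (by linarith)
  have hηpos : 0 < η := by rw [hη]; positivity
  -- the candidate derivative of rminus
  set h : ℝ → ℝ := fun x => θ ^ 2 * x / ((1 + θ * |x|) * Lg) with hh
  have hden : ∀ x : ℝ, 0 < 1 + θ * |x| := fun x => by positivity
  -- rminus formula
  have hrm : ∀ x, rminus x = (θ * |x| - Real.log (1 + θ * |x|)) / Lg := by
    intro x
    rw [hrminus, hr, hη]
    field_simp
  -- derivative at nonzero points and at 0
  have hasD : ∀ x, HasDerivAt rminus (h x) x := by
    intro x
    rcases lt_trichotomy x 0 with hx | hx | hx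
    · -- x < 0
      have hne : (1 : ℝ) + θ * -x ≠ 0 := by nlinarith
      have hne' : (1 : ℝ) - θ * x ≠ 0 := by nlinarith
      have hev : rminus =ᶠ[nhds x] fun y => (θ * -y - Real.log (1 + θ * -y)) / Lg := by
        filter_upwards [Iio_mem_nhds hx] with y hy
        rw [hrm, abs_of_neg hy]
      have hd : HasDerivAt (fun y => (θ * -y - Real.log (1 + θ * -y)) / Lg)
          ((θ * -1 - θ * -1 / (1 + θ * -x)) / Lg) x := by
        have h1 : HasDerivAt (fun y : ℝ => 1 + θ * -y) (θ * -1) x := by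
          simpa using ((hasDerivAt_id x).neg.const_mul θ).const_add 1
        have h2 : HasDerivAt (fun y => Real.log (1 + θ * -y)) (θ * -1 / (1 + θ * -x)) x :=
          h1.log hne
        simpa using (((hasDerivAt_id x).neg.const_mul θ).sub h2).div_const Lg
      have heq : (θ * -1 - θ * -1 / (1 + θ * -x)) / Lg = h x := by
        have e : θ * -1 - θ * -1 / (1 + θ * -x) = θ ^ 2 * x / (1 + θ * -x) := by
          rw [eq_div_iff hne, sub_mul, div_mul_cancel₀ _ hne]
          ring
        rw [hh]
        simp only [abs_of_neg hx]
        rw [e, div_div]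
      exact heq ▸ hd.congr_of_eventuallyEq hev
    · -- x = 0
      subst hx
      have h0 : h 0 = 0 := by simp [hh]
      rw [h0]
      rw [hasDerivAt_iff_tendsto_slope]
      have key : ∀ y : ℝ, |rminus y| ≤ θ ^ 2 * y ^ 2 / Lg := by
        intro y
        have hu : (0 : ℝ) ≤ θ * |y| := by positivity
        have hu1 : (0 : ℝ) < 1 + θ * |y| := hden y
        have hup : Real.log (1 + θ * |y|) ≤ θ * |y| := by
          have := Real.log_le_sub_one_of_pos hu1
          linarith
        have hlo : 1 - (1 + θ * |y|)⁻¹ ≤ Real.log (1 + θ * |y|) :=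
          Real.one_sub_inv_le_log_of_pos hu1
        have e1 : 1 - (1 + θ * |y|)⁻¹ = θ * |y| / (1 + θ * |y|) := by
          field_simp
          ring
        have e2 : θ * |y| - θ * |y| / (1 + θ * |y|) = (θ * |y|) ^ 2 / (1 + θ * |y|) := by
          field_simp
          ring
        have e3 : (θ * |y|) ^ 2 / (1 + θ * |y|) ≤ (θ * |y|) ^ 2 :=
          div_le_self (by positivity) (by linarith)
        have hub : θ * |y| - Real.log (1 + θ * |y|) ≤ (θ * |y|) ^ 2 := by
          rw [e1] at hlo
          linarith
        rw [hrm, abs_div, abs_of_pos hLpos, div_le_div_iff_of_pos_right hLpos,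
          abs_of_nonneg (by linarith)]
        calc θ * |y| - Real.log (1 + θ * |y|) ≤ (θ * |y|) ^ 2 := hub
          _ = θ ^ 2 * y ^ 2 := by rw [mul_pow, sq_abs]
      apply squeeze_zero_norm (a := fun y => θ ^ 2 * |y| / Lg)
      · intro y
        rcases eq_or_ne y 0 with hy | hy
        · have : slope rminus 0 0 = 0 := by simp [slope]
          rw [hy, this]
          simp only [norm_zero]
          positivity
        · rw [slope_def_field]
          have hr0 : rminus 0 = 0 := by simp [hrm]
          rw [hr0, sub_zero, sub_zero, Real.norm_eq_abs, abs_div]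
          rw [div_le_div_iff₀ (abs_pos.mpr hy) hLpos]
          have := key y
          rw [le_div_iff₀ hLpos] at this
          calc |rminus y| * Lg ≤ θ ^ 2 * y ^ 2 := this
            _ = θ ^ 2 * |y| * |y| := by rw [← sq_abs y]; ring
      · have : Filter.Tendsto (fun y : ℝ => θ ^ 2 * |y| / Lg) (nhds 0)
            (nhds (θ ^ 2 * |(0 : ℝ)| / Lg)) :=
          ((continuous_const.mul continuous_abs).div_const Lg).tendsto 0
        simp only [abs_zero, mul_zero, zero_div] at this
        exact this.mono_left nhdsWithin_le_nhds
    · -- x > 0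
      have hne : (1 : ℝ) + θ * x ≠ 0 := by nlinarith
      have hev : rminus =ᶠ[nhds x] fun y => (θ * y - Real.log (1 + θ * y)) / Lg := by
        filter_upwards [Ioi_mem_nhds hx] with y hy
        rw [hrm, abs_of_pos hy]
      have hd : HasDerivAt (fun y => (θ * y - Real.log (1 + θ * y)) / Lg)
          ((θ * 1 - θ * 1 / (1 + θ * x)) / Lg) x := by
        have h1 : HasDerivAt (fun y : ℝ => 1 + θ * y) (θ * 1) x := by
          simpa using ((hasDerivAt_id x).const_mul θ).const_add 1
        have h2 : HasDerivAt (fun y => Real.log (1 + θ * y)) (θ * 1 / (1 + θ * x)) x :=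
          h1.log hne
        simpa using (((hasDerivAt_id x).const_mul θ).sub h2).div_const Lg
      have heq : (θ * 1 - θ * 1 / (1 + θ * x)) / Lg = h x := by
        rw [hh]
        simp only [abs_of_pos hx]
        rw [div_eq_div_iff hLpos.ne' (by positivity)]
        field_simp
        ring
      exact heq ▸ hd.congr_of_eventuallyEq hev
  have hdiff : Differentiable ℝ rminus := fun x => (hasD x).differentiableAt
  have hderiv : deriv rminus = h := funext fun x => (hasD x).deriv
  -- monotonicity of q(x) = x/(1+θ|x|)
  have hqmono : ∀ x y : ℝ, x ≤ y → x / (1 + θ * |x|) ≤ y / (1 + θ * |y|) := by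
    intro x y hxy
    rw [div_le_div_iff₀ (hden x) (hden y)]
    have habs : x * |y| ≤ y * |x| := by
      rcases abs_cases x with ⟨hx1, hx2⟩ | ⟨hx1, hx2⟩ <;>
          rcases abs_cases y with ⟨hy1, hy2⟩ | ⟨hy1, hy2⟩ <;> rw [hx1, hy1]
      · nlinarith
      · linarith
      · nlinarith [mul_nonneg hy2 (neg_nonneg.2 hx2.le)]
      · nlinarith
    nlinarith [mul_le_mul_of_nonneg_left habs hθ.le]
  have hhmono : ∀ x y : ℝ, x ≤ y → h x ≤ h y := by
    intro x y hxy
    rw [hh]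
    simp only
    have := hqmono x y hxy
    rw [div_le_div_iff₀ (hden x) (hden y)] at this
    rw [div_le_div_iff₀ (by positivity) (by positivity)]
    nlinarith [mul_le_mul_of_nonneg_left this (by positivity : (0:ℝ) ≤ θ ^ 2 * Lg)]
  -- monotonicity of p(x) = x - x/(1+θ|x|)
  have hpmono : ∀ x y : ℝ, x ≤ y →
      x - x / (1 + θ * |x|) ≤ y - y / (1 + θ * |y|) := by
    intro x y hxy
    have ex : ∀ z : ℝ, z - z / (1 + θ * |z|) = θ * z * |z| / (1 + θ * |z|) := by
      intro z
      field_simp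
      ring
    rw [ex, ex, div_le_div_iff₀ (hden x) (hden y)]
    have key : x * |x| * (1 + θ * |y|) ≤ y * |y| * (1 + θ * |x|) := by
      rcases abs_cases x with ⟨hx1, hx2⟩ | ⟨hx1, hx2⟩ <;>
          rcases abs_cases y with ⟨hy1, hy2⟩ | ⟨hy1, hy2⟩ <;> rw [hx1, hy1]
      · nlinarith [mul_nonneg (mul_nonneg hθ.le (mul_nonneg hx2 hy2)) (sub_nonneg.2 hxy),
          mul_nonneg (sub_nonneg.2 hxy) (add_nonneg hx2 hy2)]
      · linarith
      · nlinarith [mul_nonneg (mul_nonneg hθ.le hy2) (sq_nonneg x), sq_nonneg x, sq_nonneg y,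
          mul_nonneg (mul_nonneg hθ.le (neg_nonneg.2 hx2.le)) (sq_nonneg y),
          mul_nonneg (mul_nonneg (mul_nonneg hθ.le hθ.le) (mul_nonneg hy2 (neg_nonneg.2 hx2.le))) (sq_nonneg y)]
      · nlinarith [mul_nonneg (mul_nonneg hθ.le (mul_pos_of_neg_of_neg hx2 hy2).le)
            (sub_nonneg.2 hxy),
          mul_nonneg (sub_nonneg.2 hxy) (by linarith : (0:ℝ) ≤ -x - y)]
    nlinarith [mul_le_mul_of_nonneg_left key hθ.le]
  -- 1-Lipschitz bound for q
  have hq_lip : ∀ x y : ℝ, |x / (1 + θ * |x|) - y / (1 + θ * |y|)| ≤ |x - y| := by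
    intro x y
    rcases le_total x y with hxy | hxy
    · have h1 := hqmono x y hxy
      have h2 := hpmono x y hxy
      rw [abs_of_nonpos (sub_nonpos.2 h1), abs_of_nonpos (sub_nonpos.2 hxy)]
      linarith
    · have h1 := hqmono y x hxy
      have h2 := hpmono y x hxy
      rw [abs_of_nonneg (sub_nonneg.2 h1), abs_of_nonneg (sub_nonneg.2 hxy)]
      linarith
  refine ⟨?_, ?_, ?_, hdiff, ?_⟩
  · intro x
    rw [hrplus, hrminus]
    ring
  · refine ⟨convex_univ, fun x _ y _ a b ha hb hab => ?_⟩
    simp only [hrplus, smul_eq_mul]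
    calc η * |a * x + b * y| ≤ η * (|a * x| + |b * y|) :=
          mul_le_mul_of_nonneg_left (abs_add_le _ _) hηpos.le
      _ = a * (η * |x|) + b * (η * |y|) := by
          rw [abs_mul, abs_mul, abs_of_nonneg ha, abs_of_nonneg hb]; ring
  · apply MonotoneOn.convexOn_of_deriv convex_univ hdiff.continuous.continuousOn
      hdiff.differentiableOn
    rw [hderiv]
    exact fun a _ b _ hab => hhmono a b hab
  · refine ⟨⟨θ ^ 2 / Lg, by positivity⟩, ?_⟩
    rw [hderiv]
    apply LipschitzWith.of_dist_le_mul
    intro x y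
    rw [Real.dist_eq, Real.dist_eq, hh]
    simp only [NNReal.coe_mk]
    have hx := hden x
    have hy := hden y
    have hc : θ ^ 2 * x / ((1 + θ * |x|) * Lg) - θ ^ 2 * y / ((1 + θ * |y|) * Lg)
        = (θ ^ 2 / Lg) * (x / (1 + θ * |x|) - y / (1 + θ * |y|)) := by
      field_simp
    rw [hc, abs_mul, abs_of_nonneg (by positivity : (0:ℝ) ≤ θ ^ 2 / Lg)]
    exact mul_le_mul_of_nonneg_left (hq_lip x y) (by positivity)
end

section
/- Let f: ℝ^d → ℝ be differentiable, h: ℝ^d → ℝ convex, K ⊆ ℝ^d convex, and let x̂ minimize u ↦ f̃(u) + h(u) + πᵀ(u − x) over K, where f̃ is a μ-strongly convex differentiable surrogate satisfying ∇f̃(x) = ∇f(x), and π = 0, evaluated at base point x ∈ K. If x̂ = x, then x is a stationary point of f + h on K, i.e., f'(x; u − x) + h(u) − h(x) ≥ 0 for all u ∈ K. -/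
/-- Fixed points of the SCA subproblem are stationary: if `x̂` minimizes
`f̃(·) + h(·)` over `K` (with `π = 0`), where `f̃` is a `μ`-strongly convex
surrogate with `∇f̃(x) = ∇f(x)`, and `x̂ = x`, then `x` is a stationary point
of `f + h` on `K`. -/
theorem stmt_9 (d : ℕ) (μ : ℝ) (hμ : 0 < μ)
    (f ftil h : EuclideanSpace ℝ (Fin d) → ℝ)
    (K : Set (EuclideanSpace ℝ (Fin d))) (hKcv : Convex ℝ K)
    (hfdiff : Differentiable ℝ f)
    (hftil : StrongConvexOn K μ ftil)
    (hftildiff : Differentiable ℝ ftil)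
    (hh : ConvexOn ℝ K h)
    (x xhat : EuclideanSpace ℝ (Fin d)) (hx : x ∈ K) (hxhat : xhat ∈ K)
    (hgrad : gradient ftil x = gradient f x)
    (hmin : ∀ u ∈ K, ftil xhat + h xhat ≤ ftil u + h u)
    (hfix : xhat = x) :
    ∀ u ∈ K, 0 ≤ inner ℝ (gradient f x) (u - x) + h u - h x := by
  rw [hfix] at hmin
  intro u hu
  rw [← hgrad]
  set g : ℝ → ℝ := fun t => ftil (x + t • (u - x)) with hg
  have hL : HasDerivAt (fun t : ℝ => x + t • (u - x)) (u - x) 0 := by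
    simpa using ((hasDerivAt_id (0:ℝ)).smul_const (u - x)).const_add x
  have hx0 : x + (0:ℝ) • (u - x) = x := by simp
  have hgderiv : HasDerivAt g (fderiv ℝ ftil x (u - x)) 0 := by
    have hD : HasFDerivAt ftil (fderiv ℝ ftil x) (x + (0:ℝ) • (u - x)) := by
      rw [hx0]; exact (hftildiff x).hasFDerivAt
    have := hD.comp_hasDerivAt 0 hL
    exact this
  have hinner : (fderiv ℝ ftil x) (u - x)
      = (inner ℝ (gradient ftil x) (u - x) : ℝ) := by
    rw [gradient]
    exact (InnerProductSpace.toDual_symm_apply).symm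
  have htend : Filter.Tendsto (fun t : ℝ => (g t - g 0) / t) (nhdsWithin 0 (Set.Ioi 0))
      (nhds ((fderiv ℝ ftil x) (u - x))) := by
    have := hgderiv.tendsto_slope_zero_right
    simpa [slope_def_field, div_eq_inv_mul] using this
  have hbound : ∀ᶠ t in nhdsWithin (0:ℝ) (Set.Ioi 0), h x - h u ≤ (g t - g 0) / t := by
    filter_upwards [Ioo_mem_nhdsGT_of_mem (Set.left_mem_Ico.2 one_pos)] with t ht
    obtain ⟨ht0, ht1⟩ := ht
    have heq : (1 - t) • x + t • u = x + t • (u - x) := by module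
    have hmem : x + t • (u - x) ∈ K := by
      have := hKcv hx hu (by linarith : (0:ℝ) ≤ 1 - t) ht0.le (by ring)
      rwa [heq] at this
    have hhle : h (x + t • (u - x)) ≤ (1 - t) * h x + t * h u := by
      have := hh.2 hx hu (by linarith : (0:ℝ) ≤ 1 - t) ht0.le (by ring)
      rw [heq] at this
      simpa [smul_eq_mul] using this
    have hminx := hmin _ hmem
    have hkey : t * (h x - h u) ≤ g t - g 0 := by
      simp only [hg, hx0]
      nlinarith
    rw [le_div_iff₀ ht0]
    linarith
  have hfin : h x - h u ≤ (fderiv ℝ ftil x) (u - x) :=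
    ge_of_tendsto htend hbound
  rw [hinner] at hfin
  linarith
end

section
/- Let f̃ be μ-strongly convex differentiable with ∇f̃(x) = ∇f(x) at base point x ∈ K, h convex on convex K, and x̂ = argmin_{u∈K} f̃(u) + h(u). Then (x̂ − x)ᵀ∇f(x) + h(x̂) − h(x) ≤ −μ‖x̂ − x‖². In particular, x̂ − x is a descent direction for f + h at x whenever x̂ ≠ x. -/
open InnerProductSpace Set Filter Topology

local notation "⟪" a ", " b "⟫" => @inner ℝ _ _ a b

/-- Gradient inequality for convex functions. -/
lemma grad_ineq {E : Type*} [NormedAddCommGroup E] [InnerProductSpace ℝ E] [CompleteSpace E]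
    {s : Set E} {g : E → ℝ} {g' x y : E}
    (hg : ConvexOn ℝ s g) (hx : x ∈ s) (hy : y ∈ s)
    (hd : HasGradientAt g g' x) :
    ⟪g', y - x⟫ ≤ g y - g x := by
  set L : ℝ →ᵃ[ℝ] E := AffineMap.lineMap x y with hL
  have hLt : ∀ t : ℝ, L t = t • (y - x) + x := fun t => AffineMap.lineMap_apply_module' x y t
  have hφc : ConvexOn ℝ (L ⁻¹' s) (g ∘ L) := hg.comp_affineMap L
  have h0 : (0:ℝ) ∈ L ⁻¹' s := by simp [Set.mem_preimage, hLt 0, hx]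
  have h1 : (1:ℝ) ∈ L ⁻¹' s := by simp [Set.mem_preimage, hLt 1, hy]
  have hline : HasDerivAt (fun t : ℝ => L t) (y - x) 0 := by
    simp only [hLt]
    simpa using ((hasDerivAt_id (0:ℝ)).smul_const (y - x)).add_const x
  have hderiv : HasDerivAt (g ∘ L) ⟪g', y - x⟫ 0 := by
    have hfd : HasFDerivAt g (toDual ℝ E g') (L 0) := by
      rw [hLt 0]; simpa using hd.hasFDerivAt
    have := hfd.comp_hasDerivAt 0 hline
    simpa [toDual_apply_apply] using this
  have := hφc.le_slope_of_hasDerivAt h0 h1 zero_lt_one hderiv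
  simpa [slope_def_field, Function.comp, hLt 0, hLt 1] using this

/-- Gradient of `u ↦ μ/2 * ‖u‖²`. -/
lemma hasGradientAt_half_norm_sq {E : Type*} [NormedAddCommGroup E] [InnerProductSpace ℝ E]
    [CompleteSpace E] (μ : ℝ) (x : E) :
    HasGradientAt (fun u : E => μ / 2 * ‖u‖ ^ 2) (μ • x) x := by
  rw [hasGradientAt_iff_hasFDerivAt]
  have hid := hasFDerivAt_id (𝕜 := ℝ) x
  have h1 : HasFDerivAt (fun u : E => ⟪u, u⟫)
      ((fderivInnerCLM ℝ (x, x)).comp ((ContinuousLinearMap.id ℝ E).prod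
        (ContinuousLinearMap.id ℝ E))) x := hid.inner ℝ hid
  have h2 := h1.const_mul (μ / 2)
  have h3 : HasFDerivAt (fun u : E => μ / 2 * ‖u‖ ^ 2)
      ((μ / 2) • ((fderivInnerCLM ℝ (x, x)).comp ((ContinuousLinearMap.id ℝ E).prod
        (ContinuousLinearMap.id ℝ E)))) x := by
    convert h2 using 2 with u
    · rfl
    rw [real_inner_self_eq_norm_sq]
  refine h3.congr_fderiv ?_
  ext v
  simp [fderivInnerCLM_apply, toDual_apply_apply, inner_smul_left, real_inner_comm x v]
  ring




/-- Descent property of the SCA direction: if `x̂` minimizes the strongly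
convex surrogate `f̃ + h` over `K`, with `∇f̃(x) = ∇f(x)` at the base point
`x ∈ K`, then `⟨∇f(x), x̂ − x⟩ + h(x̂) − h(x) ≤ −μ‖x̂ − x‖²`. -/
theorem stmt_10 (d : ℕ) (μ : ℝ) (hμ : 0 < μ)
    (f ftil h : EuclideanSpace ℝ (Fin d) → ℝ)
    (K : Set (EuclideanSpace ℝ (Fin d))) (hKcv : Convex ℝ K)
    (hfdiff : Differentiable ℝ f)
    (hftil : StrongConvexOn K μ ftil)
    (hftildiff : Differentiable ℝ ftil)
    (hh : ConvexOn ℝ K h)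
    (x xhat : EuclideanSpace ℝ (Fin d)) (hx : x ∈ K) (hxhat : xhat ∈ K)
    (hgrad : gradient ftil x = gradient f x)
    (hmin : ∀ u ∈ K, ftil xhat + h xhat ≤ ftil u + h u) :
    inner ℝ (gradient f x) (xhat - x) + h xhat - h x ≤ -μ * ‖xhat - x‖ ^ 2 := by
  have hGsc := hftil.add hh.uniformConvexOn_zero
  have key : ∀ a b : ℝ, 0 ≤ a → 0 < b → a + b = 1 →
      μ / 2 * a * ‖xhat - x‖ ^ 2 ≤ (ftil x + h x) - (ftil xhat + h xhat) := by
    intro a b ha hb hab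
    have hu : a • xhat + b • x ∈ K := hKcv hxhat hx ha hb.le hab
    have h1 := hGsc.2 hxhat hx ha hb.le hab
    have h2 := hmin _ hu
    simp only [Pi.add_apply, Pi.zero_apply, smul_eq_mul, add_zero] at h1
    have htrans := h2.trans h1
    have ha' : a = 1 - b := by linarith
    subst ha'
    have hmul : b * (μ / 2 * (1 - b) * ‖xhat - x‖ ^ 2) ≤
        b * ((ftil x + h x) - (ftil xhat + h xhat)) := by nlinarith [htrans]
    exact le_of_mul_le_mul_left hmul hb
  have hgap : μ / 2 * ‖xhat - x‖ ^ 2 ≤ (ftil x + h x) - (ftil xhat + h xhat) := by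
    have hseq : Tendsto (fun n : ℕ => μ / 2 * (1 - 1 / (n + 1) : ℝ) * ‖xhat - x‖ ^ 2) atTop
        (𝓝 (μ / 2 * 1 * ‖xhat - x‖ ^ 2)) := by
      refine Tendsto.mul_const _ (Tendsto.const_mul _ ?_)
      simpa using tendsto_const_nhds.sub (tendsto_one_div_add_atTop_nhds_zero_nat (𝕜 := ℝ))
    have hbd : ∀ n : ℕ, μ / 2 * (1 - 1 / (n + 1) : ℝ) * ‖xhat - x‖ ^ 2 ≤
        (ftil x + h x) - (ftil xhat + h xhat) := by
      intro n
      have hbpos : (0:ℝ) < 1 / (n + 1) := by positivity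
      have hble : (1:ℝ) / (n + 1) ≤ 1 := by
        rw [div_le_one (by positivity)]; linarith [Nat.cast_nonneg (α := ℝ) n]
      exact key (1 - 1 / (n + 1)) (1 / (n + 1)) (by linarith) hbpos (by ring)
    have hle := le_of_tendsto hseq (Filter.Eventually.of_forall hbd)
    simpa using hle
  have hconv := strongConvexOn_iff_convex.mp hftil
  have hgd : HasGradientAt (fun u : EuclideanSpace ℝ (Fin d) => ftil u - μ / 2 * ‖u‖ ^ 2)
      (gradient ftil x - μ • x) x := by
    rw [hasGradientAt_iff_hasFDerivAt]
    have h1 := (hftildiff x).hasGradientAt.hasFDerivAt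
    have h2 := (hasGradientAt_half_norm_sq μ x).hasFDerivAt
    refine (h1.sub h2).congr_fderiv ?_
    simp [map_sub]
  have h3 := grad_ineq hconv hx hxhat hgd
  rw [inner_sub_left] at h3
  have h4 : (inner ℝ (μ • x) (xhat - x) : ℝ) = μ * ((inner ℝ x xhat : ℝ) - ‖x‖ ^ 2) := by
    rw [real_inner_smul_left, inner_sub_right, real_inner_self_eq_norm_sq]
  have hexp : ‖xhat - x‖ ^ 2 = ‖xhat‖ ^ 2 - 2 * (inner ℝ xhat x : ℝ) + ‖x‖ ^ 2 :=
    norm_sub_sq_real xhat x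
  have hcomm : (inner ℝ x xhat : ℝ) = (inner ℝ xhat x : ℝ) := real_inner_comm xhat x
  rw [← hgrad]
  nlinarith [h3, hgap, h4, hexp, hcomm]
end
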